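/- Let S be a nonempty finite set of distinct points in ℂⁿ and let |S| denote its cardinality. Then the singular degree satisfies Ω(S) ≤ |S|^{1/n}. -/

import Mathlib

open MvPolynomial Filter

/-- The iterated partial derivative `∂^α` acting on polynomials in `n` variables. -/
noncomputable def iterPDeriv (n : ℕ) (α : Fin n → ℕ) :
    Module.End ℂ (MvPolynomial (Fin n) ℂ) :=
  (List.finRange n).foldl
    (fun L i => ((MvPolynomial.pderiv i).toLinearMap ^ α i) * L) 1

/-- `ord(P,p) ≥ l`: all partial derivatives of `P` of total order `< l` vanish at `p`. -/
def HasOrderAtLeast {n : ℕ} (P : MvPolynomial (Fin n) ℂ) (p : Fin n → ℂ) (l : ℕ) : Prop :=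
  ∀ α : Fin n → ℕ, (∑ i, α i) < l → MvPolynomial.eval p (iterPDeriv n α P) = 0

/-- `Ω(S,l)`: minimal degree of a nonzero polynomial vanishing to order `≥ l` at each point of `S`. -/
noncomputable def Omega {n : ℕ} (S : Finset (Fin n → ℂ)) (l : ℕ) : ℕ :=
  sInf {d | ∃ P : MvPolynomial (Fin n) ℂ,
    P ≠ 0 ∧ (∀ p ∈ S, HasOrderAtLeast P p l) ∧ P.totalDegree = d}


/-- The singular degree `Ω(S) := inf_{l ≥ 1} Ω(S,l)/l`. -/
noncomputable def singDeg {n : ℕ} (S : Finset (Fin n → ℂ)) : ℝ :=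
  ⨅ l : ℕ+, (Omega S (l : ℕ) : ℝ) / (l : ℕ)

/-! ### Auxiliary material -/

/-- The lattice simplex `{α : Fin n → ℕ | ∑ α ≤ D}` as a finset. -/
noncomputable def simpFin (n D : ℕ) : Finset (Fin n → ℕ) :=
  (Fintype.piFinset fun _ => Finset.range (D+1)).filter (fun α => ∑ i, α i ≤ D)

lemma mem_simpFin {n D : ℕ} {α : Fin n → ℕ} : α ∈ simpFin n D ↔ ∑ i, α i ≤ D := by
  constructor
  · intro h; exact (Finset.mem_filter.mp h).2
  · intro h
    refine Finset.mem_filter.mpr ⟨Fintype.mem_piFinset.mpr fun i => Finset.mem_range.mpr ?_, h⟩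
    exact Nat.lt_succ_of_le
      ((Finset.single_le_sum (f := α) (fun _ _ => Nat.zero_le _) (Finset.mem_univ i)).trans h)

lemma sum_choose_aux (n D : ℕ) :
    ∑ j ∈ Finset.range (D+1), (j+n).choose n = (D+n+1).choose (n+1) := by
  induction D with
  | zero => simp
  | succ D ih =>
    rw [Finset.sum_range_succ, ih, show D+1+n = D+n+1 by omega, Nat.choose_succ_succ (D+n+1) n]
    simp only [Nat.succ_eq_add_one]
    omega

lemma card_simpFin (n : ℕ) : ∀ D, (simpFin n D).card = (D+n).choose n := by
  induction n with
  | zero =>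
    intro D
    have h : simpFin 0 D = {(fun i => i.elim0)} := by
      ext α
      simp only [mem_simpFin, Finset.mem_singleton]
      constructor
      · intro _; funext i; exact i.elim0
      · intro h; simp
    rw [h]; simp
  | succ n ih =>
    intro D
    have key : (simpFin (n+1) D).card
        = ((Finset.range (D+1)).sigma (fun t => simpFin n (D - t))).card := by
      apply Finset.card_nbij' (fun α => ⟨α 0, Fin.tail α⟩) (fun p => Fin.cons p.1 p.2)
      · intro α hα
        rw [Finset.mem_coe, mem_simpFin, Fin.sum_univ_succ] at hα
        refine Finset.mem_sigma.mpr ⟨?_, ?_⟩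
        · show α 0 ∈ Finset.range (D+1)
          rw [Finset.mem_range]; omega
        · show Fin.tail α ∈ simpFin n (D - α 0)
          rw [mem_simpFin]
          show ∑ i : Fin n, α i.succ ≤ D - α 0
          omega
      · intro p hp
        obtain ⟨h1, h2⟩ := Finset.mem_sigma.mp hp
        rw [Finset.mem_range] at h1
        rw [mem_simpFin] at h2
        rw [Finset.mem_coe, mem_simpFin, Fin.sum_univ_succ]
        simp only [Fin.cons_zero, Fin.cons_succ]
        omega
      · intro α _; exact Fin.cons_self_tail α
      · rintro ⟨t, β⟩ _
        simp [Fin.tail_cons]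
    rw [key, Finset.card_sigma]
    have h2 : ∑ t ∈ Finset.range (D+1), (simpFin n (D - t)).card
        = ∑ t ∈ Finset.range (D+1), (D - t + n).choose n :=
      Finset.sum_congr rfl fun t _ => ih (D - t)
    rw [h2]
    have h3 := Finset.sum_range_reflect (fun t => (D - t + n).choose n) (D+1)
    have h4 : ∑ j ∈ Finset.range (D+1), (D - (D + 1 - 1 - j) + n).choose n
        = ∑ j ∈ Finset.range (D+1), (j+n).choose n := by
      refine Finset.sum_congr rfl fun j hj => ?_
      rw [Finset.mem_range] at hj
      congr 2
      omega
    rw [← h3, h4, sum_choose_aux, show D+(n+1) = D+n+1 from by omega]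

lemma aeval_eq_eval' {n : ℕ} (p : Fin n → ℂ) (q : MvPolynomial (Fin n) ℂ) :
    MvPolynomial.aeval p q = MvPolynomial.eval p q := by
  rw [MvPolynomial.aeval_def, Algebra.algebraMap_self]
  rfl

lemma exists_poly {n : ℕ} (S : Finset (Fin n → ℂ)) (l d : ℕ) (hl : 0 < l)
    (hcard : S.card * ((l - 1 + n).choose n) < (d + n).choose n) :
    ∃ P : MvPolynomial (Fin n) ℂ,
      P ≠ 0 ∧ (∀ p ∈ S, HasOrderAtLeast P p l) ∧ P.totalDegree ≤ d := by
  classical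
  set T := simpFin n d with hT
  set U := simpFin n (l-1) with hU
  let toPoly : (↥T → ℂ) →ₗ[ℂ] MvPolynomial (Fin n) ℂ :=
  { toFun := fun c => ∑ α : ↥T, c α • monomial (Finsupp.equivFunOnFinite.symm α.1) 1
    map_add' := by
      intro x y
      simp [add_smul, Finset.sum_add_distrib]
    map_smul' := by
      intro m x
      simp [Finset.smul_sum, smul_smul] }
  let Φ : (↥T → ℂ) →ₗ[ℂ] ((↥S × ↥U) → ℂ) :=
    (LinearMap.pi fun q : ↥S × ↥U =>
      (MvPolynomial.aeval (q.1.1 : Fin n → ℂ) :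
          MvPolynomial (Fin n) ℂ →ₐ[ℂ] ℂ).toLinearMap ∘ₗ
        iterPDeriv n q.2.1) ∘ₗ toPoly
  have hrank : Module.finrank ℂ ((↥S × ↥U) → ℂ) < Module.finrank ℂ (↥T → ℂ) := by
    rw [Module.finrank_pi, Module.finrank_pi, Fintype.card_prod, Fintype.card_coe,
      Fintype.card_coe, Fintype.card_coe, hT, hU, card_simpFin, card_simpFin]
    exact hcard
  have hninj : ¬ Function.Injective Φ := fun hinj =>
    absurd (LinearMap.finrank_le_finrank_of_injective hinj) (not_le.mpr hrank)
  obtain ⟨c₁, c₂, hee, hne⟩ := Function.not_injective_iff.mp hninj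
  set c := c₁ - c₂ with hcdef
  have hc0 : c ≠ 0 := sub_ne_zero.mpr hne
  have hΦc : Φ c = 0 := by rw [hcdef, map_sub, hee, sub_self]
  have hcoeff : ∀ α : ↥T,
      MvPolynomial.coeff (Finsupp.equivFunOnFinite.symm α.1) (toPoly c) = c α := by
    intro α
    show MvPolynomial.coeff _
      (∑ β : ↥T, c β • monomial (Finsupp.equivFunOnFinite.symm β.1) 1) = c α
    rw [MvPolynomial.coeff_sum]
    simp only [MvPolynomial.coeff_smul, MvPolynomial.coeff_monomial,
      EmbeddingLike.apply_eq_iff_eq, Subtype.val_inj, smul_eq_mul, mul_ite, mul_one, mul_zero]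
    simp [Finset.sum_ite_eq']
  refine ⟨toPoly c, ?_, ?_, ?_⟩
  · intro hP
    obtain ⟨α, hα⟩ := Function.ne_iff.mp hc0
    apply hα
    have := hcoeff α
    rw [hP] at this
    simpa using this.symm
  · intro p hp α hα
    have hαU : α ∈ U := by rw [hU, mem_simpFin]; omega
    have h0 := congrFun hΦc (⟨p, hp⟩, ⟨α, hαU⟩)
    simp only [Φ, LinearMap.coe_comp, Function.comp_apply, LinearMap.pi_apply,
      AlgHom.toLinearMap_apply, Pi.zero_apply] at h0
    rw [← aeval_eq_eval']
    exact h0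
  · refine le_trans (MvPolynomial.totalDegree_finset_sum _ _) ?_
    apply Finset.sup_le
    intro β _
    refine le_trans (MvPolynomial.totalDegree_smul_le _ _) ?_
    refine le_trans (MvPolynomial.totalDegree_monomial_le _ _) ?_
    rw [Finsupp.sum_fintype _ _ (fun _ => rfl)]
    exact mem_simpFin.mp β.2

lemma Omega_le {n : ℕ} (S : Finset (Fin n → ℂ)) (l d : ℕ) (hl : 0 < l)
    (hcard : S.card * ((l - 1 + n).choose n) < (d + n).choose n) : Omega S l ≤ d := by
  obtain ⟨P, h0, hord, hdeg⟩ := exists_poly S l d hl hcard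
  exact le_trans (Nat.sInf_le ⟨P, h0, hord, rfl⟩) hdeg

theorem singDeg_le_card_rpow {n : ℕ} (hn : 0 < n) (S : Finset (Fin n → ℂ)) (hS : S.Nonempty) :
    singDeg S ≤ (S.card : ℝ) ^ ((n : ℝ)⁻¹) := by
  set k := S.card with hk
  have hk1 : 1 ≤ k := hS.card_pos
  set c : ℝ := (k : ℝ) ^ ((n : ℝ)⁻¹) with hc
  have hc0 : 0 ≤ c := Real.rpow_nonneg (by positivity) _
  have hcpow : c ^ n = (k : ℝ) := by
    rw [hc, ← Real.rpow_natCast ((k:ℝ) ^ ((n:ℝ)⁻¹)) n, ← Real.rpow_mul (by positivity),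
      inv_mul_cancel₀ (by exact_mod_cast hn.ne' : (n:ℝ) ≠ 0), Real.rpow_one]
  have hbdd : BddBelow (Set.range fun l : ℕ+ => (Omega S (l : ℕ) : ℝ) / (l : ℕ)) := by
    refine ⟨0, ?_⟩
    rintro x ⟨l, rfl⟩
    positivity
  have key : ∀ l : ℕ+, singDeg S ≤ c + (c * n + 1) / (l : ℕ) := by
    intro l
    set L : ℕ := (l : ℕ) with hL
    have hL1 : 1 ≤ L := l.one_le
    have hLpos : (0:ℝ) < (L:ℝ) := by exact_mod_cast hL1
    set d : ℕ := ⌈c * ((L:ℝ) + n)⌉₊ with hd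
    have h1 : c * ((L:ℝ) + n) < (d:ℝ) + 1 := lt_of_le_of_lt (Nat.le_ceil _) (by linarith)
    have hpow : k * (L - 1 + n)^n < (d+1)^n := by
      have hm : ((L - 1 + n : ℕ) : ℝ) ≤ (L:ℝ) + n := by
        have h : (L - 1 + n : ℕ) ≤ L + n := by omega
        calc ((L - 1 + n : ℕ) : ℝ) ≤ ((L + n : ℕ) : ℝ) := by exact_mod_cast h
          _ = (L:ℝ) + n := by push_cast; ring
      have hreal : (k:ℝ) * (((L - 1 + n : ℕ)):ℝ)^n < ((d:ℝ)+1)^n := by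
        have e1 : (k:ℝ) * (((L - 1 + n : ℕ)):ℝ)^n = (c * ((L - 1 + n : ℕ):ℝ))^n := by
          rw [mul_pow, hcpow]
        rw [e1]
        apply pow_lt_pow_left₀ _ (by positivity) hn.ne'
        calc c * ((L - 1 + n : ℕ):ℝ) ≤ c * ((L:ℝ) + n) :=
              mul_le_mul_of_nonneg_left hm hc0
          _ < (d:ℝ) + 1 := h1
      exact_mod_cast hreal
    have hchoose : k * ((L - 1 + n).choose n) < (d + n).choose n := by
      have hA : n.factorial * (k * ((L-1+n).choose n)) ≤ k * (L-1+n)^n := by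
        rw [show n.factorial * (k * ((L-1+n).choose n))
            = k * (n.factorial * ((L-1+n).choose n)) by ring,
          ← Nat.descFactorial_eq_factorial_mul_choose]
        exact Nat.mul_le_mul_left _ (Nat.descFactorial_le_pow _ _)
      have hB : (d+1)^n ≤ n.factorial * ((d+n).choose n) := by
        rw [← Nat.descFactorial_eq_factorial_mul_choose]
        have h := Nat.pow_sub_le_descFactorial (d+n) n
        rwa [show d+n+1-n = d+1 by omega] at h
      have hlt : n.factorial * (k * ((L-1+n).choose n)) < n.factorial * ((d+n).choose n) :=
        lt_of_le_of_lt hA (lt_of_lt_of_le hpow hB)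
      exact Nat.lt_of_mul_lt_mul_left hlt
    have hOm : Omega S L ≤ d := Omega_le S L d hL1 hchoose
    have hstep : singDeg S ≤ (Omega S L : ℝ) / (L:ℝ) := by
      unfold singDeg
      exact ciInf_le hbdd l
    refine le_trans hstep ?_
    have hd_le : (d : ℝ) ≤ c * ((L:ℝ) + n) + 1 := le_of_lt (Nat.ceil_lt_add_one (by positivity))
    have h2 : (Omega S L : ℝ) / (L:ℝ) ≤ (c * ((L:ℝ) + n) + 1) / (L:ℝ) := by
      gcongr
      calc (Omega S L : ℝ) ≤ (d:ℝ) := by exact_mod_cast hOm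
        _ ≤ _ := hd_le
    have heq : (c * ((L:ℝ) + n) + 1) / (L:ℝ) = c + (c * n + 1) / (L:ℝ) := by
      field_simp
      ring
    rw [heq] at h2
    exact h2
  refine le_of_forall_pos_le_add ?_
  intro ε hε
  set l : ℕ+ := ⟨⌈(c * n + 1)/ε⌉₊ + 1, Nat.succ_pos _⟩ with hl
  refine le_trans (key l) ?_
  have hlpos : (0:ℝ) < ((l:ℕ):ℝ) := by exact_mod_cast l.pos
  have htail : (c * n + 1)/((l:ℕ):ℝ) ≤ ε := by
    rw [div_le_iff₀ hlpos]
    have h1 : (c*n+1)/ε ≤ ((l:ℕ):ℝ) := by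
      refine le_trans (Nat.le_ceil _) ?_
      exact_mod_cast Nat.le_succ _
    calc c*n+1 = ((c*n+1)/ε) * ε := by field_simp
      _ ≤ ((l:ℕ):ℝ) * ε := by gcongr
      _ = ε * ((l:ℕ):ℝ) := mul_comm _ _
  linarith
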